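/- (Genuine N-body entanglement) Let N ≥ 2 and for each pair a < b in {1,…,N} let Φ_{ab} = φ_{ab}(0,1) + φ_{ab}(1,0) − φ_{ab}(0,0) − φ_{ab}(1,1) be the signed entangling phase, and let ψ_t be the time-evolved N-body state. Let G be the simple graph on the vertex set {1,…,N} with an edge between a and b exactly when Φ_{ab} ≠ 0. Then G is connected if and only if there exists t > 0 such that for every subset S ⊆ {1,…,N} with S nonempty and S ≠ {1,…,N}, the reduced density matrix ρ_S(t) is mixed, i.e. Σ_{x,y}|ρ_S(t)_{xy}|² < 1 (equivalently, the I-concurrence across the bipartition S|Sᶜ is strictly positive). In other words, the time evolution leads to genuine N-body entanglement if and only if the graph representing the system is connected. -/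

import Mathlib

open Real

/-- Combine an assignment `x` of bits to the qubits in `S` with an assignment
`j` of bits to the qubits in `Sᶜ` into a full bit string. -/
def QGEM.merge {N : ℕ} (S : Finset (Fin N)) (x : {i : Fin N // i ∈ S} → Fin 2)
    (j : {i : Fin N // i ∈ Sᶜ} → Fin 2) : Fin N → Fin 2 :=
  fun i => if h : i ∈ S then x ⟨i, h⟩ else j ⟨i, Finset.mem_compl.mpr h⟩


private lemma QGEM.sec_right (f : Fin 2 → Fin 2 → ℝ)
    (h : f 0 1 + f 1 0 - f 0 0 - f 1 1 = 0) (a b c d : Fin 2) :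
    f a c - f b c = f a d - f b d := by
  fin_cases a <;> fin_cases b <;> fin_cases c <;> fin_cases d <;>
    simp_all <;> linarith

private lemma QGEM.sec_left (f : Fin 2 → Fin 2 → ℝ)
    (h : f 0 1 + f 1 0 - f 0 0 - f 1 1 = 0) (a b c d : Fin 2) :
    f c a - f c b = f d a - f d b := by
  fin_cases a <;> fin_cases b <;> fin_cases c <;> fin_cases d <;>
    simp_all <;> linarith

private lemma QGEM.abs_add_lt {x y : ℂ} (hxy : ‖x‖ = ‖y‖)
    (hx : x ≠ 0) (hne : x ≠ y) :
    ‖x + y‖ < ‖x‖ + ‖y‖ := by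
  have hsr : ¬ SameRay ℝ x y := by
    intro hs
    have h1 := hs.norm_smul_eq
    rw [hxy] at h1
    have h0 : ‖y‖ ≠ 0 := by
      rw [← hxy]; simpa using hx
    exact hne (smul_right_injective ℂ h0 h1).symm
  have hle := norm_add_le x y
  refine lt_of_le_of_ne hle fun h => hsr (sameRay_iff_norm_add.mpr ?_)
  simpa using h

private lemma QGEM.walk_cross {V : Type*} {G : SimpleGraph V} {S : V → Prop} :
    ∀ {u v : V}, G.Walk u v → S u → ¬ S v → ∃ a b, S a ∧ ¬ S b ∧ G.Adj a b := by
  intro u v w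
  induction w with
  | nil => intro hu hv; exact absurd hu hv
  | @cons u c v h p ih =>
    intro hu hv
    by_cases hc : S c
    · exact ih hc hv
    · exact ⟨u, c, hu, hc, h⟩

private lemma QGEM.term_eq (N : ℕ) (phiJ : (Fin N → Fin 2) → ℝ)
    (ψ : ℝ → (Fin N → Fin 2) → ℂ)
    (hψ : ∀ t J, ψ t J = Complex.ofReal (1 / Real.sqrt (2 ^ N)) *
      Complex.exp (Complex.I * Complex.ofReal (t * phiJ J)))
    (t : ℝ) (J K : Fin N → Fin 2) :
    ψ t J * (starRingEnd ℂ) (ψ t K)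
      = Complex.ofReal ((1 / Real.sqrt (2 ^ N)) ^ 2) *
        Complex.exp (Complex.I * Complex.ofReal (t * (phiJ J - phiJ K))) := by
  rw [hψ, hψ, map_mul, Complex.conj_ofReal, ← Complex.exp_conj, map_mul,
    Complex.conj_I, Complex.conj_ofReal, mul_mul_mul_comm, ← Complex.exp_add]
  congr 1
  · push_cast; ring
  · push_cast; ring

private lemma QGEM.abs_term (c θ : ℝ) (hc : 0 ≤ c) :
    ‖Complex.ofReal c * Complex.exp (Complex.I * Complex.ofReal θ)‖ = c := by
  rw [norm_mul, Complex.norm_exp]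
  simp [Complex.mul_re, abs_of_nonneg hc]

private lemma QGEM.sum_const_eq_one (N : ℕ) (S : Finset (Fin N)) :
    ∑ _x : {i : Fin N // i ∈ S} → Fin 2, ∑ _y : {i : Fin N // i ∈ S} → Fin 2,
      (((2 ^ Sᶜ.card : ℕ) : ℝ) * (1 / Real.sqrt (2 ^ N)) ^ 2) ^ 2 = 1 := by
  classical
  rw [Finset.sum_const, Finset.sum_const, Finset.card_univ, Fintype.card_fun,
    Fintype.card_coe, Fintype.card_fin, nsmul_eq_mul, nsmul_eq_mul]
  have hsq : (1 / Real.sqrt (2 ^ N)) ^ 2 = 1 / 2 ^ N := by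
    rw [div_pow, one_pow, Real.sq_sqrt (by positivity)]
  rw [hsq]
  have hsplit : (2 : ℝ) ^ S.card * 2 ^ Sᶜ.card = 2 ^ N := by
    rw [← pow_add, Finset.card_add_card_compl, Fintype.card_fin]
  push_cast
  rw [← hsplit]
  have h1 : (0:ℝ) < 2 ^ S.card := by positivity
  have h2 : (0:ℝ) < 2 ^ Sᶜ.card := by positivity
  field_simp

private lemma QGEM.Fterm {N : ℕ} (φ : Fin N → Fin N → Fin 2 → Fin 2 → ℝ)
    (Φ : Fin N → Fin N → ℝ)
    (hΦ : ∀ a b, Φ a b = φ a b 0 1 + φ a b 1 0 - φ a b 0 0 - φ a b 1 1)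
    (a b p q : Fin N) (hab : a ≠ b) (hpq : p < q)
    (horient : (p = a ∧ q = b) ∨ (p = b ∧ q = a)) (p' q' : Fin N) :
    ((if p' < q' then φ p' q' 0 0 else 0)
      - (if p' < q' then φ p' q' (if p' = a then 1 else 0) (if q' = a then 1 else 0) else 0))
      - ((if p' < q' then φ p' q' (if p' = b then 1 else 0) (if q' = b then 1 else 0) else 0)
      - (if p' < q' then φ p' q' (if p' = a then 1 else if p' = b then 1 else 0)
          (if q' = a then 1 else if q' = b then 1 else 0) else 0))
    = if p' = p then (if q' = q then -Φ p q else 0) else 0 := by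
  by_cases h1 : p' < q'
  · by_cases hpa : p' = a <;> by_cases hpb : p' = b <;> by_cases hqa : q' = a <;>
      by_cases hqb : q' = b <;>
      rcases horient with ⟨rfl, rfl⟩ | ⟨rfl, rfl⟩ <;>
      simp_all [hΦ] <;>
      first
        | ring1
        | (exfalso; omega)
        | (exfalso; exact absurd (hpq.trans h1) (lt_irrefl _))
        | (intros; ring1)
  · have h2 : ¬ (p' = p ∧ q' = q) := by
      rintro ⟨rfl, rfl⟩; exact h1 hpq
    simp only [if_neg h1]
    rcases Decidable.em (p' = p) with rfl | hp
    · rw [if_pos rfl, if_neg (fun hq => h2 ⟨rfl, hq⟩)]; ring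
    · rw [if_neg hp]; ring

/-- (Genuine N-body entanglement) The simple graph on the `N` masses whose
edges are the pairs with nonzero signed entangling phase is connected if and
only if there is a time `t > 0` at which, for every nonempty proper subset `S`
of the qubits, the reduced density matrix of `S` is mixed
(`Tr ρ_S(t)² < 1`), i.e. the time evolution leads to genuine N-body
entanglement. -/
theorem genuine_N_body_entanglement_iff_connected (N : ℕ) (hN : 2 ≤ N)
    (φ : Fin N → Fin N → Fin 2 → Fin 2 → ℝ)
    (Φ : Fin N → Fin N → ℝ)
    (hΦ : ∀ a b, Φ a b = φ a b 0 1 + φ a b 1 0 - φ a b 0 0 - φ a b 1 1)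
    (phiJ : (Fin N → Fin 2) → ℝ)
    (hphiJ : ∀ J, phiJ J = ∑ p, ∑ q, if p < q then φ p q (J p) (J q) else 0)
    (ψ : ℝ → (Fin N → Fin 2) → ℂ)
    (hψ : ∀ t J, ψ t J = Complex.ofReal (1 / Real.sqrt (2 ^ N)) *
      Complex.exp (Complex.I * Complex.ofReal (t * phiJ J))) :
    (SimpleGraph.fromRel (fun a b => a < b ∧ Φ a b ≠ 0)).Connected ↔
      ∃ t : ℝ, 0 < t ∧ ∀ S : Finset (Fin N), S.Nonempty → S ≠ Finset.univ →
        ∑ x : {i : Fin N // i ∈ S} → Fin 2,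
          ∑ y : {i : Fin N // i ∈ S} → Fin 2,
            ‖∑ j : {i : Fin N // i ∈ Sᶜ} → Fin 2,
              ψ t (QGEM.merge S x j) *
                (starRingEnd ℂ) (ψ t (QGEM.merge S y j))‖ ^ 2 < 1 := by
  classical
  have hr2 : (1 / Real.sqrt (2 ^ N)) ^ 2 = 1 / 2 ^ N := by
    rw [div_pow, one_pow, Real.sq_sqrt (by positivity)]
  have hr2pos : 0 < (1 / Real.sqrt (2 ^ N)) ^ 2 := by rw [hr2]; positivity
  constructor
  · intro hconn
    set T : ℝ := ∑ a : Fin N, ∑ b : Fin N, |Φ a b| with hTdef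
    have hT0 : 0 ≤ T :=
      Finset.sum_nonneg fun a _ => Finset.sum_nonneg fun b _ => abs_nonneg _
    refine ⟨Real.pi / (1 + T), by positivity, ?_⟩
    set t := Real.pi / (1 + T) with htdef
    have htpos : 0 < t := by rw [htdef]; positivity
    have hsmall : ∀ a b : Fin N, t * |Φ a b| < 2 * Real.pi := by
      intro a b
      have hab2 : |Φ a b| ≤ T := by
        rw [hTdef]
        have hstep1 : |Φ a b| ≤ ∑ b' : Fin N, |Φ a b'| :=
          Finset.single_le_sum (f := fun b' => |Φ a b'|) (fun j _ => abs_nonneg _) (Finset.mem_univ b)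
        have hstep2 : (∑ b' : Fin N, |Φ a b'|) ≤ ∑ a' : Fin N, ∑ b' : Fin N, |Φ a' b'| :=
          Finset.single_le_sum (f := fun a' => ∑ b' : Fin N, |Φ a' b'|)
            (fun i _ => Finset.sum_nonneg fun j _ => abs_nonneg _)
            (Finset.mem_univ a)
        exact le_trans hstep1 hstep2
      rw [htdef, div_mul_eq_mul_div, div_lt_iff₀ (by positivity : (0:ℝ) < 1 + T)]
      nlinarith [Real.pi_pos]
    intro S hSne hSuniv
    obtain ⟨u, huS⟩ := hSne
    obtain ⟨v, hvS⟩ : ∃ v, v ∉ S := by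
      by_contra hx
      push_neg at hx
      exact hSuniv (Finset.eq_univ_iff_forall.mpr hx)
    obtain ⟨w⟩ := hconn.preconnected u v
    obtain ⟨a, b, haS, hbS, hadj⟩ :=
      QGEM.walk_cross (S := fun z : Fin N => z ∈ S) w huS hvS
    rw [SimpleGraph.fromRel_adj] at hadj
    obtain ⟨hab, horr⟩ := hadj
    obtain ⟨p, q, hpq, hPhine, horient⟩ :
        ∃ p q : Fin N, p < q ∧ Φ p q ≠ 0 ∧ ((p = a ∧ q = b) ∨ (p = b ∧ q = a)) := by
      rcases horr with ⟨h1, h2⟩ | ⟨h1, h2⟩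
      · exact ⟨a, b, h1, h2, Or.inl ⟨rfl, rfl⟩⟩
      · exact ⟨b, a, h1, h2, Or.inr ⟨rfl, rfl⟩⟩
    set x0 : {i : Fin N // i ∈ S} → Fin 2 := fun _ => 0 with hx0
    set y0 : {i : Fin N // i ∈ S} → Fin 2 :=
      fun i => if (i : Fin N) = a then 1 else 0 with hy0
    set j0 : {i : Fin N // i ∈ Sᶜ} → Fin 2 := fun _ => 0 with hj0
    set j1 : {i : Fin N // i ∈ Sᶜ} → Fin 2 :=
      fun i => if (i : Fin N) = b then 1 else 0 with hj1
    have hm1 : ∀ i, QGEM.merge S x0 j0 i = 0 := by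
      intro i
      by_cases h : i ∈ S
      · simp only [QGEM.merge, dif_pos h, hx0]
      · simp only [QGEM.merge, dif_neg h, hj0]
    have hm2 : ∀ i, QGEM.merge S y0 j0 i = (if i = a then 1 else 0) := by
      intro i
      by_cases h : i ∈ S
      · simp only [QGEM.merge, dif_pos h, hy0]
      · simp only [QGEM.merge, dif_neg h, hj0]
        rw [if_neg (fun hia : i = a => h (hia ▸ haS))]
    have hm3 : ∀ i, QGEM.merge S x0 j1 i = (if i = b then 1 else 0) := by
      intro i
      by_cases h : i ∈ S
      · simp only [QGEM.merge, dif_pos h, hx0]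
        rw [if_neg (fun hib : i = b => hbS (hib ▸ h))]
      · simp only [QGEM.merge, dif_neg h, hj1]
    have hm4 : ∀ i, QGEM.merge S y0 j1 i
        = (if i = a then 1 else if i = b then 1 else 0) := by
      intro i
      by_cases h : i ∈ S
      · simp only [QGEM.merge, dif_pos h, hy0]
        by_cases hia : i = a
        · rw [if_pos hia, if_pos hia]
        · rw [if_neg hia, if_neg hia, if_neg (fun hib : i = b => hbS (hib ▸ h))]
      · simp only [QGEM.merge, dif_neg h, hj1]
        rw [if_neg (fun hia : i = a => h (hia ▸ haS))]
    have hphi1 : phiJ (QGEM.merge S x0 j0)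
        = ∑ p' : Fin N, ∑ q' : Fin N, if p' < q' then φ p' q' 0 0 else 0 := by
      rw [hphiJ]
      exact Finset.sum_congr rfl fun p' _ => Finset.sum_congr rfl fun q' _ => by
        rw [hm1 p', hm1 q']
    have hphi2 : phiJ (QGEM.merge S y0 j0)
        = ∑ p' : Fin N, ∑ q' : Fin N, if p' < q' then
            φ p' q' (if p' = a then 1 else 0) (if q' = a then 1 else 0) else 0 := by
      rw [hphiJ]
      exact Finset.sum_congr rfl fun p' _ => Finset.sum_congr rfl fun q' _ => by
        rw [hm2 p', hm2 q']
    have hphi3 : phiJ (QGEM.merge S x0 j1)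
        = ∑ p' : Fin N, ∑ q' : Fin N, if p' < q' then
            φ p' q' (if p' = b then 1 else 0) (if q' = b then 1 else 0) else 0 := by
      rw [hphiJ]
      exact Finset.sum_congr rfl fun p' _ => Finset.sum_congr rfl fun q' _ => by
        rw [hm3 p', hm3 q']
    have hphi4 : phiJ (QGEM.merge S y0 j1)
        = ∑ p' : Fin N, ∑ q' : Fin N, if p' < q' then
            φ p' q' (if p' = a then 1 else if p' = b then 1 else 0)
              (if q' = a then 1 else if q' = b then 1 else 0) else 0 := by
      rw [hphiJ]
      exact Finset.sum_congr rfl fun p' _ => Finset.sum_congr rfl fun q' _ => by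
        rw [hm4 p', hm4 q']
    have hD : (phiJ (QGEM.merge S x0 j0) - phiJ (QGEM.merge S y0 j0))
        - (phiJ (QGEM.merge S x0 j1) - phiJ (QGEM.merge S y0 j1)) = -Φ p q := by
      rw [hphi1, hphi2, hphi3, hphi4, ← Finset.sum_sub_distrib,
        ← Finset.sum_sub_distrib, ← Finset.sum_sub_distrib]
      have hinner2 : ∀ p' : Fin N,
          ((∑ q' : Fin N, if p' < q' then φ p' q' 0 0 else 0)
            - ∑ q' : Fin N, if p' < q' then
                φ p' q' (if p' = a then 1 else 0) (if q' = a then 1 else 0) else 0)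
          - ((∑ q' : Fin N, if p' < q' then
                φ p' q' (if p' = b then 1 else 0) (if q' = b then 1 else 0) else 0)
            - ∑ q' : Fin N, if p' < q' then
                φ p' q' (if p' = a then 1 else if p' = b then 1 else 0)
                  (if q' = a then 1 else if q' = b then 1 else 0) else 0)
          = if p' = p then -Φ p q else 0 := by
        intro p'
        rw [← Finset.sum_sub_distrib, ← Finset.sum_sub_distrib, ← Finset.sum_sub_distrib]
        rw [Finset.sum_congr rfl fun q' _ => QGEM.Fterm φ Φ hΦ a b p q hab hpq horient p' q']
        by_cases hp' : p' = p
        · subst hp'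
          simp [Finset.sum_ite_eq']
        · simp [hp']
      rw [Finset.sum_congr rfl fun p' _ => hinner2 p']
      simp [Finset.sum_ite_eq']
    have hexp_ne : Complex.exp (Complex.I * Complex.ofReal
          (t * (phiJ (QGEM.merge S x0 j0) - phiJ (QGEM.merge S y0 j0))))
        ≠ Complex.exp (Complex.I * Complex.ofReal
          (t * (phiJ (QGEM.merge S x0 j1) - phiJ (QGEM.merge S y0 j1)))) := by
      set d0 := phiJ (QGEM.merge S x0 j0) - phiJ (QGEM.merge S y0 j0) with hd0
      set d1 := phiJ (QGEM.merge S x0 j1) - phiJ (QGEM.merge S y0 j1) with hd1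
      intro hEq
      have h2 : Complex.exp (Complex.I * Complex.ofReal (t * d0)
          - Complex.I * Complex.ofReal (t * d1)) = 1 := by
        rw [Complex.exp_sub, hEq, div_self (Complex.exp_ne_zero _)]
      rw [Complex.exp_eq_one_iff] at h2
      obtain ⟨n, hn⟩ := h2
      have h3 : ((t * d0 - t * d1 : ℝ) : ℂ) * Complex.I
          = ((n * (2 * Real.pi) : ℝ) : ℂ) * Complex.I := by
        push_cast
        push_cast at hn
        linear_combination hn
      have h4 : t * d0 - t * d1 = (n : ℝ) * (2 * Real.pi) := by
        exact_mod_cast mul_right_cancel₀ Complex.I_ne_zero h3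
      have h5 : t * (d0 - d1) = (n : ℝ) * (2 * Real.pi) := by
        calc t * (d0 - d1) = t * d0 - t * d1 := by ring
          _ = _ := h4
      rw [hD] at h5
      have hn0 : n ≠ 0 := by
        intro h0
        rw [h0] at h5
        push_cast at h5
        rw [zero_mul] at h5
        rcases mul_eq_zero.mp h5 with h | h
        · exact (ne_of_gt htpos) h
        · exact hPhine (neg_eq_zero.mp h)
      have h1n : (1:ℝ) ≤ |(n:ℝ)| := by exact_mod_cast Int.one_le_abs hn0
      have h6 : t * |Φ p q| = |(n:ℝ)| * (2 * Real.pi) := by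
        have h7 : |t * -Φ p q| = |(n:ℝ) * (2 * Real.pi)| := by rw [h5]
        rw [abs_mul, abs_neg, abs_of_pos htpos, abs_mul,
          abs_of_pos (by positivity : (0:ℝ) < 2 * Real.pi)] at h7
        exact h7
      nlinarith [hsmall p q, Real.pi_pos]
    have hterm := QGEM.term_eq N phiJ ψ hψ t
    have habsz : ∀ (x y : {i : Fin N // i ∈ S} → Fin 2) (jj : {i : Fin N // i ∈ Sᶜ} → Fin 2),
        ‖ψ t (QGEM.merge S x jj) * (starRingEnd ℂ) (ψ t (QGEM.merge S y jj))‖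
          = (1 / Real.sqrt (2 ^ N)) ^ 2 := by
      intro x y jj
      rw [hterm, QGEM.abs_term _ _ (le_of_lt hr2pos)]
    have hcard : Fintype.card ({i : Fin N // i ∈ Sᶜ} → Fin 2) = 2 ^ Sᶜ.card := by
      rw [Fintype.card_fun, Fintype.card_coe, Fintype.card_fin]
    have hle : ∀ x y : {i : Fin N // i ∈ S} → Fin 2,
        ‖∑ j : {i : Fin N // i ∈ Sᶜ} → Fin 2,
          ψ t (QGEM.merge S x j) * (starRingEnd ℂ) (ψ t (QGEM.merge S y j))‖
        ≤ ((2 ^ Sᶜ.card : ℕ) : ℝ) * (1 / Real.sqrt (2 ^ N)) ^ 2 := by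
      intro x y
      refine le_trans (norm_sum_le _ _) ?_
      rw [Finset.sum_congr rfl fun jj _ => habsz x y jj, Finset.sum_const,
        Finset.card_univ, hcard, nsmul_eq_mul]
    have hbc : b ∈ Sᶜ := Finset.mem_compl.mpr hbS
    have hj01 : j0 ≠ j1 := by
      intro h
      have h2 := congrFun h ⟨b, hbc⟩
      simp [hj0, hj1] at h2
    have hzne : ψ t (QGEM.merge S x0 j0) * (starRingEnd ℂ) (ψ t (QGEM.merge S y0 j0))
        ≠ ψ t (QGEM.merge S x0 j1) * (starRingEnd ℂ) (ψ t (QGEM.merge S y0 j1)) := by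
      rw [hterm, hterm]
      intro hEq
      exact hexp_ne (mul_left_cancel₀
        (Complex.ofReal_ne_zero.mpr (ne_of_gt hr2pos)) hEq)
    have hstrict : ‖∑ j : {i : Fin N // i ∈ Sᶜ} → Fin 2,
          ψ t (QGEM.merge S x0 j) * (starRingEnd ℂ) (ψ t (QGEM.merge S y0 j))‖
        < ((2 ^ Sᶜ.card : ℕ) : ℝ) * (1 / Real.sqrt (2 ^ N)) ^ 2 := by
      set f : ({i : Fin N // i ∈ Sᶜ} → Fin 2) → ℂ := fun jj =>
        ψ t (QGEM.merge S x0 jj) * (starRingEnd ℂ) (ψ t (QGEM.merge S y0 jj)) with hf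
      have hsub : ({j0, j1} : Finset ({i : Fin N // i ∈ Sᶜ} → Fin 2)) ⊆ Finset.univ :=
        Finset.subset_univ _
      have hsplit2 : (Finset.univ : Finset ({i : Fin N // i ∈ Sᶜ} → Fin 2))
          = {j0, j1} ∪ (Finset.univ \ {j0, j1}) := (Finset.union_sdiff_of_subset hsub).symm
      rw [hsplit2, Finset.sum_union Finset.disjoint_sdiff, Finset.sum_pair hj01]
      have habs0 : ‖f j0‖ = (1 / Real.sqrt (2 ^ N)) ^ 2 := habsz x0 y0 j0
      have habs1 : ‖f j1‖ = (1 / Real.sqrt (2 ^ N)) ^ 2 := habsz x0 y0 j1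
      have hf0ne : f j0 ≠ 0 := by
        intro h0
        rw [h0, norm_zero] at habs0
        exact absurd habs0.symm (ne_of_gt hr2pos)
      have hA := QGEM.abs_add_lt (habs0.trans habs1.symm) hf0ne hzne
      rw [habs0, habs1] at hA
      have hrest : ‖∑ jj ∈ Finset.univ \ {j0, j1}, f jj‖
          ≤ (((Finset.univ \ {j0, j1} : Finset ({i : Fin N // i ∈ Sᶜ} → Fin 2))).card : ℝ)
            * (1 / Real.sqrt (2 ^ N)) ^ 2 := by
        refine le_trans (norm_sum_le _ _) ?_
        rw [Finset.sum_congr rfl fun jj _ => habsz x0 y0 jj, Finset.sum_const, nsmul_eq_mul]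
      have h2le : 2 ≤ 2 ^ Sᶜ.card := by
        have hc1 : 1 ≤ Sᶜ.card := Finset.card_pos.mpr ⟨b, hbc⟩
        calc 2 = 2 ^ 1 := rfl
          _ ≤ 2 ^ Sᶜ.card := Nat.pow_le_pow_right (by norm_num) hc1
      have hcard2 : (((Finset.univ \ {j0, j1} : Finset ({i : Fin N // i ∈ Sᶜ} → Fin 2))).card : ℝ)
          = ((2 ^ Sᶜ.card : ℕ) : ℝ) - 2 := by
        rw [Finset.card_sdiff_of_subset hsub, Finset.card_pair hj01, Finset.card_univ, hcard,
          Nat.cast_sub h2le]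
        norm_num
      rw [hcard2] at hrest
      calc ‖f j0 + f j1 + ∑ jj ∈ Finset.univ \ {j0, j1}, f jj‖
          ≤ ‖f j0 + f j1‖
            + ‖∑ jj ∈ Finset.univ \ {j0, j1}, f jj‖ := norm_add_le _ _
        _ < ((1 / Real.sqrt (2 ^ N)) ^ 2 + (1 / Real.sqrt (2 ^ N)) ^ 2)
            + ((((2 ^ Sᶜ.card : ℕ) : ℝ) - 2) * (1 / Real.sqrt (2 ^ N)) ^ 2) :=
          add_lt_add_of_lt_of_le hA hrest
        _ = ((2 ^ Sᶜ.card : ℕ) : ℝ) * (1 / Real.sqrt (2 ^ N)) ^ 2 := by ring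
    refine lt_of_lt_of_eq ?_ (QGEM.sum_const_eq_one N S)
    refine Finset.sum_lt_sum (fun x _ => Finset.sum_le_sum fun y _ =>
        pow_le_pow_left₀ (norm_nonneg _) (hle x y) 2)
      ⟨x0, Finset.mem_univ _, Finset.sum_lt_sum (fun y _ =>
        pow_le_pow_left₀ (norm_nonneg _) (hle x0 y) 2)
        ⟨y0, Finset.mem_univ _, pow_lt_pow_left₀ hstrict (norm_nonneg _) (by norm_num)⟩⟩
  · rintro ⟨t, htpos, hall⟩
    by_contra hnc
    have hNe : Nonempty (Fin N) := ⟨⟨0, by omega⟩⟩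
    set G := SimpleGraph.fromRel (fun a b : Fin N => a < b ∧ Φ a b ≠ 0) with hG
    have hpre : ¬ G.Preconnected := fun h => hnc ⟨h⟩
    rw [SimpleGraph.Preconnected] at hpre
    push_neg at hpre
    obtain ⟨u, v, huv⟩ := hpre
    set S : Finset (Fin N) := Finset.univ.filter (fun w => G.Reachable u w) with hSdef
    have huS : u ∈ S := by
      simp only [hSdef, Finset.mem_filter, Finset.mem_univ, true_and]
      exact SimpleGraph.Reachable.refl u
    have hvS : v ∉ S := by
      simp only [hSdef, Finset.mem_filter, Finset.mem_univ, true_and]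
      exact huv
    -- no crossing edges have nonzero Φ
    have hcross : ∀ p q : Fin N, p < q →
        ((p ∈ S ∧ q ∉ S) ∨ (p ∉ S ∧ q ∈ S)) → Φ p q = 0 := by
      intro p q hpq hmem
      by_contra hΦne
      have hadj : G.Adj p q := by
        rw [hG, SimpleGraph.fromRel_adj]
        exact ⟨hpq.ne, Or.inl ⟨hpq, hΦne⟩⟩
      rcases hmem with ⟨hp, hq⟩ | ⟨hp, hq⟩
      · refine hq ?_
        simp only [hSdef, Finset.mem_filter, Finset.mem_univ, true_and] at hp ⊢
        exact hp.trans hadj.reachable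
      · refine hp ?_
        simp only [hSdef, Finset.mem_filter, Finset.mem_univ, true_and] at hq ⊢
        exact hq.trans hadj.symm.reachable
    have hSne : S.Nonempty := ⟨u, huS⟩
    have hSuniv : S ≠ Finset.univ := by
      intro h; exact hvS (h ▸ Finset.mem_univ v)
    have h1 := hall S hSne hSuniv
    -- constancy of phase differences in j
    set jc0 : {i : Fin N // i ∈ Sᶜ} → Fin 2 := fun _ => 0 with hjc0
    have hconst : ∀ (x y : {i : Fin N // i ∈ S} → Fin 2) (jj : {i : Fin N // i ∈ Sᶜ} → Fin 2),
        phiJ (QGEM.merge S x jj) - phiJ (QGEM.merge S y jj)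
          = phiJ (QGEM.merge S x jc0) - phiJ (QGEM.merge S y jc0) := by
      intro x y jj
      rw [hphiJ, hphiJ, hphiJ, hphiJ, ← Finset.sum_sub_distrib, ← Finset.sum_sub_distrib]
      refine Finset.sum_congr rfl fun p _ => ?_
      rw [← Finset.sum_sub_distrib, ← Finset.sum_sub_distrib]
      refine Finset.sum_congr rfl fun q _ => ?_
      by_cases hpq : p < q
      · rw [if_pos hpq, if_pos hpq, if_pos hpq, if_pos hpq]
        by_cases hp : p ∈ S <;> by_cases hq : q ∈ S
        · simp only [QGEM.merge, dif_pos hp, dif_pos hq]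
        · have hz := hcross p q hpq (Or.inl ⟨hp, hq⟩)
          rw [hΦ] at hz
          simp only [QGEM.merge, dif_pos hp, dif_neg hq]
          exact QGEM.sec_right (φ p q) hz _ _ _ _
        · have hz := hcross p q hpq (Or.inr ⟨hp, hq⟩)
          rw [hΦ] at hz
          simp only [QGEM.merge, dif_neg hp, dif_pos hq]
          exact QGEM.sec_left (φ p q) hz _ _ _ _
        · simp only [QGEM.merge, dif_neg hp, dif_neg hq]
          rw [sub_self, sub_self]
      · rw [if_neg hpq, if_neg hpq, if_neg hpq, if_neg hpq]
    -- each inner sum has modulus 2^(Sᶜ.card) * r²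
    have hcard : Fintype.card ({i : Fin N // i ∈ Sᶜ} → Fin 2) = 2 ^ Sᶜ.card := by
      rw [Fintype.card_fun, Fintype.card_coe, Fintype.card_fin]
    have habs : ∀ x y : {i : Fin N // i ∈ S} → Fin 2,
        ‖∑ j : {i : Fin N // i ∈ Sᶜ} → Fin 2,
          ψ t (QGEM.merge S x j) * (starRingEnd ℂ) (ψ t (QGEM.merge S y j))‖
        = ((2 ^ Sᶜ.card : ℕ) : ℝ) * (1 / Real.sqrt (2 ^ N)) ^ 2 := by
      intro x y
      have hsum : (∑ j : {i : Fin N // i ∈ Sᶜ} → Fin 2,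
          ψ t (QGEM.merge S x j) * (starRingEnd ℂ) (ψ t (QGEM.merge S y j)))
          = ((2 ^ Sᶜ.card : ℕ) : ℂ) * (Complex.ofReal ((1 / Real.sqrt (2 ^ N)) ^ 2) *
              Complex.exp (Complex.I * Complex.ofReal
                (t * (phiJ (QGEM.merge S x jc0) - phiJ (QGEM.merge S y jc0))))) := by
        rw [Finset.sum_congr rfl fun jj _ => ?_]
        · rw [Finset.sum_const, Finset.card_univ, hcard, nsmul_eq_mul]
        · rw [QGEM.term_eq N phiJ ψ hψ t, hconst x y jj]
      rw [hsum, norm_mul, Complex.norm_natCast,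
        QGEM.abs_term _ _ (le_of_lt hr2pos)]
    have hone : (∑ x : {i : Fin N // i ∈ S} → Fin 2,
        ∑ y : {i : Fin N // i ∈ S} → Fin 2,
          ‖∑ j : {i : Fin N // i ∈ Sᶜ} → Fin 2,
            ψ t (QGEM.merge S x j) *
              (starRingEnd ℂ) (ψ t (QGEM.merge S y j))‖ ^ 2) = 1 := by
      rw [Finset.sum_congr rfl fun x _ => Finset.sum_congr rfl fun y _ => by rw [habs x y]]
      exact QGEM.sum_const_eq_one N S
    rw [hone] at h1
    exact lt_irrefl 1 h1
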